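/- The set G of elements ∑_α c_α R_α in the completion of NSym with c_∅ = 1 and n! · c_{(n)} = c_{(1)}^n for all n > 1 is a subgroup of the group of invertible elements under multiplication. -/
import Mathlib


/-- Integer compositions: lists of positive integers. -/
abbrev Comp := {l : List ℕ // ∀ x ∈ l, 0 < x}

/-- Near-concatenation: merge the last part of `β` with the first part of `γ`
(intended for nonempty `β`, `γ`). -/
def nearConcat (β γ : List ℕ) : List ℕ :=
  β.dropLast ++ (β.getLastD 0 + γ.headD 0) :: γ.tail

/-- `(β, γ)` is a splitting of `α` if `β·γ = α` (concatenation) or `β⊙γ = α`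
(near-concatenation). -/
def SplitOf (β γ α : Comp) : Prop :=
  β.1 ++ γ.1 = α.1 ∨ (β.1 ≠ [] ∧ γ.1 ≠ [] ∧ nearConcat β.1 γ.1 = α.1)

/-- The product of formal series `∑ f(α) R_α` in the completion of NSym, induced by the
ribbon product `R_β R_γ = R_{β·γ} + R_{β⊙γ}`. -/
noncomputable def mulS (f g : Comp → ℝ) : Comp → ℝ :=
  fun α => ∑ᶠ (p : Comp × Comp) (_ : SplitOf p.1 p.2 α), f p.1 * g p.2

/-- The unit series `R_∅`. -/
noncomputable def oneS : Comp → ℝ := fun α => if α.1 = [] then 1 else 0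

/-- The empty composition. -/
def emptyComp : Comp := ⟨[], by simp⟩

/-- The one-part composition `(n)` for `n ≥ 1`. -/
def singleComp (n : ℕ) (hn : 0 < n) : Comp := ⟨[n], by simpa using hn⟩

/-- Membership in `G`: `c_∅ = 1` and `n! · c_{(n)} = c_{(1)}^n` for all `n > 1`. -/
def memG (f : Comp → ℝ) : Prop :=
  f emptyComp = 1 ∧ ∀ n : ℕ, ∀ hn : 1 < n,
    (Nat.factorial n : ℝ) * f (singleComp n (Nat.zero_lt_one.trans hn)) = (f (singleComp 1 one_pos)) ^ n

/-! ## cut functions -/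

def cutL : List ℕ → ℕ → List ℕ
  | _, 0 => []
  | [], _ + 1 => []
  | x :: xs, a + 1 => if a + 1 < x then [a + 1] else x :: cutL xs (a + 1 - x)

def cutR : List ℕ → ℕ → List ℕ
  | l, 0 => l
  | [], _ + 1 => []
  | x :: xs, a + 1 => if a + 1 < x then (x - (a + 1)) :: xs else cutR xs (a + 1 - x)

lemma cutL_zero (l : List ℕ) : cutL l 0 = [] := by cases l <;> rfl
lemma cutR_zero (l : List ℕ) : cutR l 0 = l := by cases l <;> rfl
lemma cutL_nil (a : ℕ) : cutL [] a = [] := by cases a <;> rfl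
lemma cutR_nil (a : ℕ) : cutR [] a = [] := by cases a <;> rfl

lemma cutL_cons {a : ℕ} (ha : 0 < a) (x : ℕ) (xs : List ℕ) :
    cutL (x :: xs) a = if a < x then [a] else x :: cutL xs (a - x) := by
  obtain ⟨b, rfl⟩ := Nat.exists_eq_succ_of_ne_zero ha.ne'
  rfl

lemma cutR_cons {a : ℕ} (ha : 0 < a) (x : ℕ) (xs : List ℕ) :
    cutR (x :: xs) a = if a < x then (x - a) :: xs else cutR xs (a - x) := by
  obtain ⟨b, rfl⟩ := Nat.exists_eq_succ_of_ne_zero ha.ne'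
  rfl

lemma cutL_pos {l : List ℕ} (hl : ∀ x ∈ l, 0 < x) (a : ℕ) : ∀ x ∈ cutL l a, 0 < x := by
  induction l generalizing a with
  | nil => simp [cutL_nil]
  | cons y ys ih =>
    rcases Nat.eq_zero_or_pos a with rfl | ha
    · simp [cutL_zero]
    · rw [cutL_cons ha]
      split
      · intro x hx; simp at hx; omega
      · intro x hx
        rcases List.mem_cons.1 hx with rfl | hx
        · exact hl _ (by simp)
        · exact ih (fun z hz => hl z (by simp [hz])) _ x hx

lemma cutR_pos {l : List ℕ} (hl : ∀ x ∈ l, 0 < x) (a : ℕ) : ∀ x ∈ cutR l a, 0 < x := by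
  induction l generalizing a with
  | nil => simp [cutR_nil]
  | cons y ys ih =>
    rcases Nat.eq_zero_or_pos a with rfl | ha
    · simpa [cutR_zero] using hl
    · rw [cutR_cons ha]
      split
      · rename_i hlt
        intro x hx
        rcases List.mem_cons.1 hx with rfl | hx
        · omega
        · exact hl x (by simp [hx])
      · exact ih (fun z hz => hl z (by simp [hz])) _

lemma cutL_sum_eq {l : List ℕ} {a : ℕ} (h : a ≤ l.sum) : (cutL l a).sum = a := by
  induction l generalizing a with
  | nil => simp at h; simp [h, cutL_nil]
  | cons y ys ih =>
    rcases Nat.eq_zero_or_pos a with rfl | ha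
    · simp [cutL_zero]
    · rw [cutL_cons ha]
      split
      · simp
      · rename_i hlt
        simp only [List.sum_cons] at h
        have h' : a - y ≤ ys.sum := by omega
        simp only [List.sum_cons, ih h']
        omega

lemma cutR_sum_eq {l : List ℕ} {a : ℕ} (h : a ≤ l.sum) : (cutR l a).sum = l.sum - a := by
  induction l generalizing a with
  | nil => simp at h; simp [h, cutR_nil]
  | cons y ys ih =>
    rcases Nat.eq_zero_or_pos a with rfl | ha
    · simp [cutR_zero]
    · rw [cutR_cons ha]
      split
      · rename_i hlt
        simp only [List.sum_cons]
        omega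
      · rename_i hlt
        simp only [List.sum_cons] at h ⊢
        rw [ih (by omega)]
        omega

lemma cutL_sum_self {l : List ℕ} (hl : ∀ x ∈ l, 0 < x) : cutL l l.sum = l := by
  induction l with
  | nil => rfl
  | cons y ys ih =>
    have hy : 0 < y := hl y (by simp)
    simp only [List.sum_cons]
    rw [cutL_cons (by omega), if_neg (by omega), show y + ys.sum - y = ys.sum by omega,
      ih (fun z hz => hl z (by simp [hz]))]

lemma cutR_sum_self {l : List ℕ} (hl : ∀ x ∈ l, 0 < x) : cutR l l.sum = [] := by
  induction l with
  | nil => rfl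
  | cons y ys ih =>
    have hy : 0 < y := hl y (by simp)
    simp only [List.sum_cons]
    rw [cutR_cons (by omega), if_neg (by omega), show y + ys.sum - y = ys.sum by omega,
      ih (fun z hz => hl z (by simp [hz]))]

lemma nearConcat_cons (y : ℕ) {m : List ℕ} (hm : m ≠ []) (γ : List ℕ) :
    nearConcat (y :: m) γ = y :: nearConcat m γ := by
  obtain ⟨z, m', rfl⟩ := List.exists_cons_of_ne_nil hm
  simp [nearConcat, List.getLastD_cons]

lemma split_cut {l : List ℕ} (hl : ∀ x ∈ l, 0 < x) {a : ℕ} (h : a ≤ l.sum) :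
    cutL l a ++ cutR l a = l ∨
      (cutL l a ≠ [] ∧ cutR l a ≠ [] ∧ nearConcat (cutL l a) (cutR l a) = l) := by
  induction l generalizing a with
  | nil =>
    simp at h
    left; simp [h, cutL_zero, cutR_zero]
  | cons y ys ih =>
    rcases Nat.eq_zero_or_pos a with rfl | ha
    · left; simp [cutL_zero, cutR_zero]
    · rw [cutL_cons ha, cutR_cons ha]
      by_cases hlt : a < y
      · right
        rw [if_pos hlt, if_pos hlt]
        refine ⟨by simp, by simp, ?_⟩
        have hy : a + (y - a) = y := by omega
        simp [nearConcat, hy]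
      · rw [if_neg hlt, if_neg hlt]
        simp only [List.sum_cons] at h
        rcases ih (fun z hz => hl z (by simp [hz])) (show a - y ≤ ys.sum by omega) with h1 | ⟨h1, h2, h3⟩
        · left; simp [h1]
        · right
          refine ⟨by simp, h2, ?_⟩
          rw [nearConcat_cons y h1, h3]

lemma cut_append {β : List ℕ} (γ : List ℕ) (hβ : ∀ x ∈ β, 0 < x) :
    cutL (β ++ γ) β.sum = β ∧ cutR (β ++ γ) β.sum = γ := by
  induction β with
  | nil => simp [cutL_zero, cutR_zero]
  | cons y ys ih =>
    have hy : 0 < y := hβ y (by simp)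
    simp only [List.cons_append, List.sum_cons]
    rw [cutL_cons (by omega), cutR_cons (by omega), if_neg (by omega), if_neg (by omega),
      show y + ys.sum - y = ys.sum by omega]
    obtain ⟨h1, h2⟩ := ih (fun z hz => hβ z (by simp [hz]))
    exact ⟨by rw [h1], h2⟩

lemma cut_near {δ : List ℕ} (hδ : ∀ x ∈ δ, 0 < x) {b c : ℕ} (hb : 0 < b) (hc : 0 < c)
    (γ' : List ℕ) :
    cutL (δ ++ (b + c) :: γ') (δ.sum + b) = δ ++ [b] ∧
      cutR (δ ++ (b + c) :: γ') (δ.sum + b) = c :: γ' := by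
  induction δ with
  | nil =>
    simp only [List.nil_append, List.sum_nil, Nat.zero_add]
    rw [cutL_cons hb, cutR_cons hb, if_pos (by omega), if_pos (by omega)]
    exact ⟨rfl, by rw [show b + c - b = c by omega]⟩
  | cons y δ' ih =>
    have hy : 0 < y := hδ y (by simp)
    simp only [List.cons_append, List.sum_cons]
    rw [cutL_cons (by omega), cutR_cons (by omega), if_neg (by omega), if_neg (by omega),
      show y + δ'.sum + b - y = δ'.sum + b by omega]
    obtain ⟨h1, h2⟩ := ih (fun z hz => hδ z (by simp [hz]))
    exact ⟨by rw [h1], h2⟩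

lemma splitOf_cut {β γ α : Comp} (h : SplitOf β γ α) :
    β.1.sum ≤ α.1.sum ∧ β.1 = cutL α.1 β.1.sum ∧ γ.1 = cutR α.1 β.1.sum := by
  rcases h with h | ⟨hβ, hγ, h⟩
  · obtain ⟨h1, h2⟩ := cut_append γ.1 β.2
    rw [← h]
    exact ⟨by simp, h1.symm, h2.symm⟩
  · obtain ⟨c, t, hγ'⟩ := List.exists_cons_of_ne_nil hγ
    have hβ' : β.1 = β.1.dropLast ++ [β.1.getLast hβ] := (List.dropLast_append_getLast hβ).symm
    set δ := β.1.dropLast with hδdef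
    set b := β.1.getLast hβ with hbdef
    have hδpos : ∀ x ∈ δ, 0 < x := fun x hx => β.2 x (List.dropLast_subset _ hx)
    have hb : 0 < b := β.2 b (by rw [hβ']; simp)
    have hc : 0 < c := γ.2 c (by rw [hγ']; simp)
    have hnear : nearConcat β.1 γ.1 = δ ++ (b + c) :: t := by
      rw [hβ', hγ']
      simp [nearConcat, List.dropLast_concat, List.getLastD_eq_getLast?, List.getLast?_concat]
    have hα : α.1 = δ ++ (b + c) :: t := by rw [← h, hnear]
    have hsum : β.1.sum = δ.sum + b := by rw [hβ']; simp
    obtain ⟨h1, h2⟩ := cut_near hδpos hb hc t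
    refine ⟨?_, ?_, ?_⟩
    · rw [hα, hsum]; simp; omega
    · rw [hα, hsum, h1, ← hβ']
    · rw [hα, hsum, h2, ← hγ']

lemma cutL_cutL {l : List ℕ} {a b : ℕ} (hab : a ≤ b) (hb : b ≤ l.sum) :
    cutL (cutL l b) a = cutL l a := by
  induction l generalizing a b with
  | nil =>
    simp only [List.sum_nil, Nat.le_zero] at hb
    subst hb
    have : a = 0 := by omega
    subst this
    simp [cutL_zero]
  | cons y ys ih =>
    rcases Nat.eq_zero_or_pos a with rfl | ha
    · simp [cutL_zero]
    · have hb0 : 0 < b := lt_of_lt_of_le ha hab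
      rw [cutL_cons hb0]
      by_cases hby : b < y
      · rw [if_pos hby, cutL_cons ha b [], cutL_cons ha y ys]
        by_cases hab' : a < b
        · rw [if_pos hab', if_pos (by omega)]
        · have : a = b := by omega
          subst this
          rw [if_neg hab', if_pos hby, show a - a = 0 by omega, cutL_nil]
      · rw [if_neg hby]
        by_cases hay : a < y
        · rw [cutL_cons ha y (cutL ys (b - y)), cutL_cons ha y ys, if_pos hay, if_pos hay]
        · rw [cutL_cons ha y (cutL ys (b - y)), cutL_cons ha y ys, if_neg hay, if_neg hay]
          simp only [List.sum_cons] at hb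
          rw [ih (by omega) (by omega)]

lemma cutR_cutR {l : List ℕ} {a b : ℕ} (hab : a ≤ b) (hb : b ≤ l.sum) :
    cutR (cutR l a) (b - a) = cutR l b := by
  induction l generalizing a b with
  | nil =>
    simp only [List.sum_nil, Nat.le_zero] at hb
    subst hb
    have : a = 0 := by omega
    subst this
    simp [cutR_nil]
  | cons y ys ih =>
    rcases Nat.eq_zero_or_pos a with rfl | ha
    · simp [cutR_zero]
    · have hb0 : 0 < b := lt_of_lt_of_le ha hab
      rw [cutR_cons ha]
      by_cases hay : a < y
      · rw [if_pos hay]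
        rcases eq_or_lt_of_le hab with rfl | hab'
        · rw [show a - a = 0 by omega, cutR_zero, cutR_cons ha, if_pos hay]
        · rw [cutR_cons (show 0 < b - a by omega), cutR_cons hb0]
          by_cases hby : b < y
          · rw [if_pos (show b - a < y - a by omega), if_pos hby,
              show y - a - (b - a) = y - b by omega]
          · rw [if_neg (show ¬ b - a < y - a by omega), if_neg hby,
              show b - a - (y - a) = b - y by omega]
      · rw [if_neg hay, cutR_cons hb0, if_neg (by omega)]
        simp only [List.sum_cons] at hb
        rw [show b - a = (b - y) - (a - y) by omega]
        exact ih (by omega) (by omega)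

lemma cutR_cutL {l : List ℕ} {a b : ℕ} (hab : a ≤ b) (hb : b ≤ l.sum) :
    cutR (cutL l b) a = cutL (cutR l a) (b - a) := by
  induction l generalizing a b with
  | nil =>
    simp only [List.sum_nil, Nat.le_zero] at hb
    subst hb
    have : a = 0 := by omega
    subst this
    simp [cutL_zero, cutR_zero]
  | cons y ys ih =>
    rcases Nat.eq_zero_or_pos a with rfl | ha
    · rw [cutR_zero, cutR_zero, Nat.sub_zero]
    · have hb0 : 0 < b := lt_of_lt_of_le ha hab
      rw [cutL_cons hb0, cutR_cons ha y ys]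
      by_cases hby : b < y
      · have hay : a < y := lt_of_le_of_lt hab hby
        rw [if_pos hby, if_pos hay]
        rcases eq_or_lt_of_le hab with rfl | hab'
        · rw [cutR_cons ha, if_neg (lt_irrefl a), show a - a = 0 by omega, cutR_zero,
            cutL_zero]
        · rw [cutR_cons ha, if_pos hab',
            cutL_cons (show 0 < b - a by omega), if_pos (show b - a < y - a by omega)]
      · rw [if_neg hby]
        by_cases hay : a < y
        · rw [if_pos hay, cutR_cons ha, if_pos hay,
            cutL_cons (show 0 < b - a by omega), if_neg (show ¬ b - a < y - a by omega),
            show b - a - (y - a) = b - y by omega]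
        · rw [if_neg hay, cutR_cons ha, if_neg hay]
          simp only [List.sum_cons] at hb
          rw [show b - a = (b - y) - (a - y) by omega]
          exact ih (by omega) (by omega)

/-! ## Bundled cuts -/

def cL (α : Comp) (a : ℕ) : Comp := ⟨cutL α.1 a, cutL_pos α.2 a⟩
def cR (α : Comp) (a : ℕ) : Comp := ⟨cutR α.1 a, cutR_pos α.2 a⟩

lemma cL_zero (α : Comp) : cL α 0 = emptyComp := Subtype.ext (cutL_zero _)
lemma cR_zero (α : Comp) : cR α 0 = α := Subtype.ext (cutR_zero _)
lemma cL_sum (α : Comp) : cL α α.1.sum = α := Subtype.ext (cutL_sum_self α.2)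
lemma cR_sum (α : Comp) : cR α α.1.sum = emptyComp := Subtype.ext (cutR_sum_self α.2)

lemma splitOf_cL_cR (α : Comp) {a : ℕ} (ha : a ≤ α.1.sum) : SplitOf (cL α a) (cR α a) α :=
  split_cut α.2 ha

lemma mulS_eq (f g : Comp → ℝ) (α : Comp) :
    mulS f g α = ∑ a ∈ Finset.range (α.1.sum + 1), f (cL α a) * g (cR α a) := by
  classical
  have hset : {p : Comp × Comp | SplitOf p.1 p.2 α} =
      ↑((Finset.range (α.1.sum + 1)).image fun a => (cL α a, cR α a)) := by
    ext p
    simp only [Set.mem_setOf_eq, Finset.coe_image, Set.mem_image, Finset.mem_coe,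
      Finset.mem_range]
    constructor
    · intro h
      obtain ⟨hle, hβ, hγ⟩ := splitOf_cut h
      refine ⟨p.1.1.sum, by omega, ?_⟩
      rw [Prod.ext_iff]
      exact ⟨Subtype.ext hβ.symm, Subtype.ext hγ.symm⟩
    · rintro ⟨a, ha, rfl⟩
      exact splitOf_cL_cR α (by omega)
  have h1 : mulS f g α = ∑ᶠ p ∈ {p : Comp × Comp | SplitOf p.1 p.2 α}, f p.1 * g p.2 := rfl
  rw [h1, hset, finsum_mem_coe_finset,
    Finset.sum_image (fun x hx y hy hxy => ?_)]
  have hx' : x ≤ α.1.sum := by simpa [Nat.lt_succ_iff] using hx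
  have hy' : y ≤ α.1.sum := by simpa [Nat.lt_succ_iff] using hy
  have := congrArg (fun p : Comp × Comp => p.1.1.sum) hxy
  simpa [cL, cutL_sum_eq hx', cutL_sum_eq hy'] using this

lemma mulS_oneS_right (f : Comp → ℝ) : mulS f oneS = f := by
  funext α
  rw [mulS_eq]
  rw [Finset.sum_eq_single α.1.sum]
  · rw [cL_sum, cR_sum]
    simp [oneS, emptyComp]
  · intro a ha hne
    have ha' : a < α.1.sum := by
      rw [Finset.mem_range] at ha; omega
    have : (cR α a).1 ≠ [] := by
      intro hnil
      have := cutR_sum_eq (le_of_lt ha') (l := α.1)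
      rw [show (cR α a).1 = cutR α.1 a from rfl] at hnil
      rw [hnil] at this
      simp at this
      omega
    simp [oneS, this]
  · intro h
    simp at h

lemma mulS_oneS_left (f : Comp → ℝ) : mulS oneS f = f := by
  funext α
  rw [mulS_eq]
  rw [Finset.sum_eq_single 0]
  · rw [cL_zero, cR_zero]
    simp [oneS, emptyComp]
  · intro a ha hne
    have ha' : a ≤ α.1.sum := by
      rw [Finset.mem_range] at ha; omega
    have : (cL α a).1 ≠ [] := by
      intro hnil
      have := cutL_sum_eq ha' (l := α.1)
      rw [show (cL α a).1 = cutL α.1 a from rfl] at hnil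
      rw [hnil] at this
      simp at this
      omega
    simp [oneS, this]
  · intro h
    simp at h

lemma cL_cL {α : Comp} {a b : ℕ} (hab : a ≤ b) (hb : b ≤ α.1.sum) :
    cL (cL α b) a = cL α a := Subtype.ext (cutL_cutL hab hb)

lemma cR_cR {α : Comp} {a b : ℕ} (hab : a ≤ b) (hb : b ≤ α.1.sum) :
    cR (cR α a) (b - a) = cR α b := Subtype.ext (cutR_cutR hab hb)

lemma cR_cL {α : Comp} {a b : ℕ} (hab : a ≤ b) (hb : b ≤ α.1.sum) :
    cR (cL α b) a = cL (cR α a) (b - a) := Subtype.ext (cutR_cutL hab hb)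

noncomputable def T3 (f g h : Comp → ℝ) (α : Comp) (a b : ℕ) : ℝ :=
  if a ≤ b then f (cL α a) * g (cL (cR α a) (b - a)) * h (cR α b) else 0

lemma T3_pos (f g h : Comp → ℝ) (α : Comp) {a b : ℕ} (hab : a ≤ b) :
    T3 f g h α a b = f (cL α a) * g (cL (cR α a) (b - a)) * h (cR α b) := if_pos hab

lemma T3_neg (f g h : Comp → ℝ) (α : Comp) {a b : ℕ} (hab : ¬ a ≤ b) :
    T3 f g h α a b = 0 := if_neg hab

lemma mulS_assoc (f g h : Comp → ℝ) : mulS (mulS f g) h = mulS f (mulS g h) := by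
  classical
  funext α
  set n := α.1.sum with hn
  have hL : mulS (mulS f g) h α
      = ∑ b ∈ Finset.range (n + 1), ∑ a ∈ Finset.range (n + 1), T3 f g h α a b := by
    rw [mulS_eq]
    apply Finset.sum_congr rfl
    intro b hb
    have hbn : b ≤ n := by rw [Finset.mem_range] at hb; omega
    have hsum : (cL α b).1.sum = b := cutL_sum_eq hbn
    rw [mulS_eq, hsum, Finset.sum_mul]
    have e1 : ∑ a ∈ Finset.range (b + 1), f (cL (cL α b) a) * g (cR (cL α b) a) * h (cR α b)
        = ∑ a ∈ Finset.range (b + 1), T3 f g h α a b := by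
      apply Finset.sum_congr rfl
      intro a ha
      have hab : a ≤ b := by rw [Finset.mem_range] at ha; omega
      rw [T3_pos f g h α hab, cL_cL hab hbn, cR_cL hab hbn]
    rw [e1]
    apply Finset.sum_subset (Finset.range_subset_range.2 (by omega))
    intro a ha hna
    simp only [Finset.mem_range, not_lt] at hna
    exact T3_neg f g h α (by omega)
  have hR : mulS f (mulS g h) α
      = ∑ a ∈ Finset.range (n + 1), ∑ b ∈ Finset.range (n + 1), T3 f g h α a b := by
    rw [mulS_eq]
    apply Finset.sum_congr rfl
    intro a ha
    have han : a ≤ n := by rw [Finset.mem_range] at ha; omega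
    have hsum : (cR α a).1.sum = n - a := cutR_sum_eq han
    rw [mulS_eq, hsum, Finset.mul_sum]
    have step1 : ∑ c ∈ Finset.range (n - a + 1), f (cL α a) * (g (cL (cR α a) c) * h (cR (cR α a) c))
        = ∑ b ∈ Finset.Ico a (n + 1), T3 f g h α a b := by
      rw [Finset.sum_Ico_eq_sum_range, show n + 1 - a = n - a + 1 by omega]
      apply Finset.sum_congr rfl
      intro c hc
      rw [Finset.mem_range] at hc
      rw [T3_pos f g h α (show a ≤ a + c by omega), show a + c - a = c by omega,
        ← cR_cR (show a ≤ a + c by omega) (show a + c ≤ α.1.sum by omega),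
        show a + c - a = c by omega]
      ring
    rw [step1]
    apply Finset.sum_subset
    · intro b hb
      rw [Finset.mem_Ico] at hb
      rw [Finset.mem_range]
      omega
    · intro b hb hnb
      rw [Finset.mem_range] at hb
      rw [Finset.mem_Ico] at hnb
      exact T3_neg f g h α (by omega)
  rw [hL, hR, Finset.sum_comm]

/-! ## Single compositions -/

def sing (n : ℕ) : Comp := if h : n = 0 then emptyComp else ⟨[n], by simp; omega⟩

lemma sing_zero : sing 0 = emptyComp := by simp [sing]

lemma sing_val {n : ℕ} (hn : 0 < n) : (sing n).1 = [n] := by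
  rw [sing, dif_neg (by omega)]

lemma sing_eq_singleComp {n : ℕ} (hn : 0 < n) : sing n = singleComp n hn :=
  Subtype.ext (by rw [sing_val hn]; rfl)

lemma sing_sum (n : ℕ) : (sing n).1.sum = n := by
  rcases Nat.eq_zero_or_pos n with rfl | hn
  · rw [sing_zero]; rfl
  · rw [sing_val hn]; simp

lemma comp_nil_of_sum {α : Comp} (h : α.1.sum = 0) : α.1 = [] := by
  by_contra hne
  have := List.sum_pos α.1 α.2 hne
  omega

lemma cL_sing {n a : ℕ} (hn : 0 < n) (ha : a ≤ n) : cL (sing n) a = sing a := by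
  apply Subtype.ext
  show cutL (sing n).1 a = (sing a).1
  rw [sing_val hn]
  rcases Nat.eq_zero_or_pos a with rfl | ha0
  · rw [cutL_zero, sing_zero]; rfl
  · rw [sing_val ha0, cutL_cons ha0]
    by_cases h : a < n
    · rw [if_pos h]
    · have : a = n := by omega
      subst this
      rw [if_neg h, show a - a = 0 by omega, cutL_zero]

lemma cR_sing {n a : ℕ} (hn : 0 < n) (ha : a ≤ n) : cR (sing n) a = sing (n - a) := by
  apply Subtype.ext
  show cutR (sing n).1 a = (sing (n - a)).1
  rw [sing_val hn]
  rcases Nat.eq_zero_or_pos a with rfl | ha0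
  · rw [cutR_zero, show n - 0 = n by omega, sing_val hn]
  · rw [cutR_cons ha0]
    by_cases h : a < n
    · rw [if_pos h, sing_val (show 0 < n - a by omega)]
    · have : a = n := by omega
      subst this
      rw [if_neg h, show a - a = 0 by omega, cutR_zero, sing_zero]
      rfl

lemma mulS_sing (f g : Comp → ℝ) {n : ℕ} (hn : 0 < n) :
    mulS f g (sing n) = ∑ a ∈ Finset.range (n + 1), f (sing a) * g (sing (n - a)) := by
  rw [mulS_eq, sing_sum]
  apply Finset.sum_congr rfl
  intro a ha
  rw [Finset.mem_range] at ha
  rw [cL_sing hn (by omega), cR_sing hn (by omega)]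

lemma mulS_empty (f g : Comp → ℝ) : mulS f g emptyComp = f emptyComp * g emptyComp := by
  rw [mulS_eq, show (emptyComp : Comp).1.sum = 0 from rfl, Finset.sum_range_one,
    cL_zero, cR_zero]

lemma memG_fact {f : Comp → ℝ} (hf : memG f) (a : ℕ) :
    (Nat.factorial a : ℝ) * f (sing a) = (f (sing 1)) ^ a := by
  rcases Nat.lt_or_ge a 2 with h | h
  · interval_cases a
    · simp [Nat.factorial, sing_zero, hf.1]
    · simp [Nat.factorial]
  · have := hf.2 a h
    rw [sing_eq_singleComp (show (0:ℕ) < a by omega), sing_eq_singleComp one_pos]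
    exact this

lemma memG_mulS {f g : Comp → ℝ} (hf : memG f) (hg : memG g) : memG (mulS f g) := by
  have h1 : ∀ {n : ℕ}, 0 < n →
      (Nat.factorial n : ℝ) * (mulS f g) (sing n) = (f (sing 1) + g (sing 1)) ^ n := by
    intro n hn
    rw [mulS_sing f g hn, Finset.mul_sum, add_pow]
    apply Finset.sum_congr rfl
    intro a ha
    rw [Finset.mem_range] at ha
    have han : a ≤ n := by omega
    have hfac : (Nat.factorial n : ℝ)
        = (n.choose a) * (Nat.factorial a) * (Nat.factorial (n - a)) := by
      exact_mod_cast (Nat.choose_mul_factorial_mul_factorial han).symm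
    calc (Nat.factorial n : ℝ) * (f (sing a) * g (sing (n - a)))
        = ((Nat.factorial a : ℝ) * f (sing a)) *
            (((Nat.factorial (n - a)) : ℝ) * g (sing (n - a))) * (n.choose a) := by
          rw [hfac]; ring
      _ = f (sing 1) ^ a * g (sing 1) ^ (n - a) * (n.choose a) := by
          rw [memG_fact hf, memG_fact hg]
  constructor
  · rw [mulS_empty, hf.1, hg.1, one_mul]
  · intro n hn
    have hmul1 : mulS f g (singleComp 1 one_pos) = f (sing 1) + g (sing 1) := by
      rw [← sing_eq_singleComp one_pos]
      have := h1 (n := 1) one_pos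
      simpa [Nat.factorial] using this
    rw [hmul1, ← sing_eq_singleComp (show (0:ℕ) < n by omega)]
    exact h1 (by omega)

/-! ## Inverse -/

noncomputable def ginv (f : Comp → ℝ) (α : Comp) : ℝ :=
  if h : α.1.sum = 0 then 1
  else - ∑ a ∈ (Finset.Ico 1 (α.1.sum + 1)).attach, f (cL α a.1) * ginv f (cR α a.1)
termination_by α.1.sum
decreasing_by
  have ha := a.2
  rw [Finset.mem_Ico] at ha
  have hs := cutR_sum_eq (show (a : ℕ) ≤ α.1.sum by omega) (l := α.1)
  show (cR α a.1).1.sum < α.1.sum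
  rw [show (cR α a.1).1 = cutR α.1 a.1 from rfl, hs]
  omega

lemma ginv_eq (f : Comp → ℝ) (α : Comp) :
    ginv f α = if α.1.sum = 0 then 1
      else - ∑ a ∈ Finset.Ico 1 (α.1.sum + 1), f (cL α a) * ginv f (cR α a) := by
  rw [ginv]
  by_cases h : α.1.sum = 0
  · rw [dif_pos h, if_pos h]
  · rw [dif_neg h, if_neg h]
    congr 1
    exact Finset.sum_attach (Finset.Ico 1 (α.1.sum + 1))
      (fun a => f (cL α a) * ginv f (cR α a))

lemma ginv_empty (f : Comp → ℝ) : ginv f emptyComp = 1 := by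
  rw [ginv_eq, if_pos (show (emptyComp : Comp).1.sum = 0 from rfl)]

lemma mulS_ginv (f : Comp → ℝ) (hf : f emptyComp = 1) : mulS f (ginv f) = oneS := by
  funext α
  rw [mulS_eq]
  by_cases h0 : α.1.sum = 0
  · have hnil := comp_nil_of_sum h0
    rw [h0, Finset.sum_range_one, cL_zero, cR_zero, hf, one_mul, ginv_eq, if_pos h0]
    simp [oneS, hnil]
  · have hnil : α.1 ≠ [] := by
      intro h; rw [h] at h0; simp at h0
    rw [Finset.range_eq_Ico, Finset.sum_eq_sum_Ico_succ_bot (by omega),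
      cL_zero, cR_zero, hf, one_mul, ginv_eq, if_neg h0]
    simp only [zero_add, oneS, hnil, if_neg (show ¬ α.1 = [] from hnil)]
    exact neg_add_cancel _

lemma ginv_fact {f : Comp → ℝ} (hf : memG f) :
    ∀ n : ℕ, (Nat.factorial n : ℝ) * ginv f (sing n) = (- f (sing 1)) ^ n := by
  intro n
  induction n using Nat.strong_induction_on with
  | _ n ih =>
    rcases Nat.eq_zero_or_pos n with rfl | hn
    · simp [Nat.factorial, sing_zero, ginv_empty]
    · have hrel : mulS f (ginv f) (sing n) = 0 := by
        rw [mulS_ginv f hf.1]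
        simp [oneS, sing_val hn]
      rw [mulS_sing f (ginv f) hn, Finset.range_eq_Ico,
        Finset.sum_eq_sum_Ico_succ_bot (by omega)] at hrel
      simp only [zero_add] at hrel
      rw [show f (sing 0) = 1 from by rw [sing_zero]; exact hf.1, Nat.sub_zero, one_mul] at hrel
      -- hrel : ginv f (sing n) + ∑ a in Ico 1 (n+1), f (sing a) * ginv f (sing (n-a)) = 0
      have hsum : (Nat.factorial n : ℝ) *
            ∑ a ∈ Finset.Ico 1 (n + 1), f (sing a) * ginv f (sing (n - a))
          = ∑ a ∈ Finset.Ico 1 (n + 1),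
              (f (sing 1)) ^ a * (- f (sing 1)) ^ (n - a) * (n.choose a) := by
        rw [Finset.mul_sum]
        apply Finset.sum_congr rfl
        intro a ha
        rw [Finset.mem_Ico] at ha
        have han : a ≤ n := by omega
        have hfac : (Nat.factorial n : ℝ)
            = (n.choose a) * (Nat.factorial a) * (Nat.factorial (n - a)) := by
          exact_mod_cast (Nat.choose_mul_factorial_mul_factorial han).symm
        calc (Nat.factorial n : ℝ) * (f (sing a) * ginv f (sing (n - a)))
            = ((Nat.factorial a : ℝ) * f (sing a)) *
                (((Nat.factorial (n - a)) : ℝ) * ginv f (sing (n - a))) * (n.choose a) := by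
              rw [hfac]; ring
          _ = _ := by rw [memG_fact hf, ih (n - a) (by omega)]
      have hbin : ∑ a ∈ Finset.range (n + 1),
          (f (sing 1)) ^ a * (- f (sing 1)) ^ (n - a) * (n.choose a) = 0 := by
        rw [← add_pow]
        rw [add_neg_cancel, zero_pow (by omega : n ≠ 0)]
      rw [Finset.range_eq_Ico, Finset.sum_eq_sum_Ico_succ_bot (by omega)] at hbin
      simp only [zero_add, pow_zero, Nat.choose_zero_right, Nat.cast_one, one_mul, mul_one,
        Nat.sub_zero] at hbin
      have hstep : (Nat.factorial n : ℝ) * ginv f (sing n)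
          = - ((Nat.factorial n : ℝ) *
              ∑ a ∈ Finset.Ico 1 (n + 1), f (sing a) * ginv f (sing (n - a))) := by
        have : ginv f (sing n)
            = - ∑ a ∈ Finset.Ico 1 (n + 1), f (sing a) * ginv f (sing (n - a)) := by
          linarith [hrel]
        rw [this]; ring
      rw [hstep, hsum]
      linarith [hbin]

lemma memG_ginv {f : Comp → ℝ} (hf : memG f) : memG (ginv f) := by
  constructor
  · exact ginv_empty f
  · intro n hn
    have h1 := ginv_fact hf 1
    norm_num [Nat.factorial] at h1
    rw [← sing_eq_singleComp (show (0:ℕ) < n by omega), ← sing_eq_singleComp one_pos,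
      ginv_fact hf n, h1]


/-- `G` is a subgroup of the invertible elements of the completion of NSym: it contains
the unit, is closed under multiplication, and every element has a (two-sided) inverse
in `G`. -/
theorem G_is_subgroup :
    memG oneS ∧
    (∀ f g : Comp → ℝ, memG f → memG g → memG (mulS f g)) ∧
    (∀ f : Comp → ℝ, memG f →
      ∃ g : Comp → ℝ, memG g ∧ mulS f g = oneS ∧ mulS g f = oneS) := by
  refine ⟨⟨by simp [oneS, emptyComp], ?_⟩, fun f g hf hg => memG_mulS hf hg, ?_⟩
  · intro n hn
    have h1 : oneS (singleComp n (Nat.zero_lt_one.trans hn)) = 0 := by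
      simp [oneS, singleComp]
    have h2 : oneS (singleComp 1 one_pos) = 0 := by
      simp [oneS, singleComp]
    rw [h1, h2, zero_pow (by omega : n ≠ 0), mul_zero]
  · intro f hf
    refine ⟨ginv f, memG_ginv hf, mulS_ginv f hf.1, ?_⟩
    have hgk : mulS (ginv f) (ginv (ginv f)) = oneS := mulS_ginv _ (ginv_empty f)
    have hfk : f = ginv (ginv f) := by
      calc f = mulS f oneS := (mulS_oneS_right f).symm
        _ = mulS f (mulS (ginv f) (ginv (ginv f))) := by rw [hgk]
        _ = mulS (mulS f (ginv f)) (ginv (ginv f)) := (mulS_assoc f (ginv f) _).symm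
        _ = mulS oneS (ginv (ginv f)) := by rw [mulS_ginv f hf.1]
        _ = ginv (ginv f) := mulS_oneS_left _
    rw [show mulS (ginv f) f = mulS (ginv f) (ginv (ginv f)) by rw [← hfk], hgk]
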